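/- Let H be a Hilbert space and T a bounded regular operator on H. Then T is Moore-Penrose hermitian (T† = T) if and only if there exist orthogonal closed subspaces H₁ and H₂ with H = H₁ ⊕ H₂, T restricted to H₁ is zero, T(H₂) ⊆ H₂, and the restriction T₂ of T to H₂ satisfies T₂² = I₂. -/

import Mathlib

open scoped InnerProductSpace

open ContinuousLinearMap in
private lemma mp_unique {H : Type*} [NormedAddCommGroup H] [InnerProductSpace ℂ H]
    [CompleteSpace H] (T S1 S2 : H →L[ℂ] H)
    (a1 : T ∘L S1 ∘L T = T) (a2 : S1 ∘L T ∘L S1 = S1)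
    (a3 : adjoint (T ∘L S1) = T ∘L S1) (a4 : adjoint (S1 ∘L T) = S1 ∘L T)
    (b1 : T ∘L S2 ∘L T = T) (b2 : S2 ∘L T ∘L S2 = S2)
    (b3 : adjoint (T ∘L S2) = T ∘L S2) (b4 : adjoint (S2 ∘L T) = S2 ∘L T) :
    S1 = S2 := by
  have hA : T ∘L S1 = T ∘L S2 := by
    have step1 : T ∘L S1 = (T ∘L S2) ∘L (T ∘L S1) := by
      ext x
      have h := ContinuousLinearMap.ext_iff.mp b1 (S1 x)
      simp only [comp_apply] at h ⊢
      exact h.symm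
    calc T ∘L S1 = adjoint (T ∘L S1) := a3.symm
      _ = adjoint ((T ∘L S2) ∘L (T ∘L S1)) := by rw [← step1]
      _ = adjoint (T ∘L S1) ∘L adjoint (T ∘L S2) := by rw [adjoint_comp]
      _ = (T ∘L S1) ∘L (T ∘L S2) := by rw [a3, b3]
      _ = T ∘L S2 := by
          ext x
          have h := ContinuousLinearMap.ext_iff.mp a1 (S2 x)
          simp only [comp_apply] at h ⊢
          exact h
  have hB : S1 ∘L T = S2 ∘L T := by
    have step1 : S1 ∘L T = (S1 ∘L T) ∘L (S2 ∘L T) := by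
      ext x
      have h := ContinuousLinearMap.ext_iff.mp b1 x
      simp only [comp_apply] at h ⊢
      rw [h]
    calc S1 ∘L T = adjoint (S1 ∘L T) := a4.symm
      _ = adjoint ((S1 ∘L T) ∘L (S2 ∘L T)) := by rw [← step1]
      _ = adjoint (S2 ∘L T) ∘L adjoint (S1 ∘L T) := by rw [adjoint_comp]
      _ = (S2 ∘L T) ∘L (S1 ∘L T) := by rw [a4, b4]
      _ = S2 ∘L T := by
          ext x
          have h := ContinuousLinearMap.ext_iff.mp a1 x
          simp only [comp_apply] at h ⊢
          rw [h]
  ext x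
  have p1 : S1 (T (S1 x)) = S1 x := by
    have h := ContinuousLinearMap.ext_iff.mp a2 x
    simpa using h
  have p2 : T (S1 x) = T (S2 x) := by
    have h := ContinuousLinearMap.ext_iff.mp hA x
    simpa using h
  have p3 : S2 (T (S2 x)) = S2 x := by
    have h := ContinuousLinearMap.ext_iff.mp b2 x
    simpa using h
  have p4 : S1 (T (S2 x)) = S2 (T (S2 x)) := by
    have h := ContinuousLinearMap.ext_iff.mp hB (S2 x)
    simpa using h
  calc S1 x = S1 (T (S1 x)) := p1.symm
    _ = S1 (T (S2 x)) := by rw [p2]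
    _ = S2 (T (S2 x)) := p4
    _ = S2 x := p3

theorem stmt_18 {H : Type*} [NormedAddCommGroup H] [InnerProductSpace ℂ H] [CompleteSpace H]
    (T Td : H →L[ℂ] H)
    (h1 : T ∘L Td ∘L T = T) (h2 : Td ∘L T ∘L Td = Td)
    (h3 : ContinuousLinearMap.adjoint (T ∘L Td) = T ∘L Td)
    (h4 : ContinuousLinearMap.adjoint (Td ∘L T) = Td ∘L T) :
    Td = T ↔
      ∃ H₁ H₂ : Submodule ℂ H,
        IsClosed (H₁ : Set H) ∧ IsClosed (H₂ : Set H) ∧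
        (∀ x ∈ H₁, ∀ y ∈ H₂, ⟪x, y⟫_ℂ = 0) ∧ IsCompl H₁ H₂ ∧
        (∀ x ∈ H₁, T x = 0) ∧ (∀ x ∈ H₂, T x ∈ H₂) ∧
        (∀ x ∈ H₂, T (T x) = x) := by
  constructor
  · intro heq
    rw [heq] at h1 h3
    clear h2 h4 heq
    set P : H →L[ℂ] H := T ∘L T with hP
    have h1' : ∀ y, T (T (T y)) = T y := by
      intro y
      have h := ContinuousLinearMap.ext_iff.mp h1 y
      simpa [hP] using h
    have hP2 : ∀ x, P (P x) = P x := by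
      intro x
      simp only [hP, ContinuousLinearMap.comp_apply]
      rw [h1' (T x)]
    have hPadj : ContinuousLinearMap.adjoint P = P := h3
    refine ⟨LinearMap.ker (P : H →ₗ[ℂ] H), LinearMap.range (P : H →ₗ[ℂ] H), ?_, ?_, ?_, ?_, ?_, ?_, ?_⟩
    · exact ContinuousLinearMap.isClosed_ker P
    · have hset : (LinearMap.range (P : H →ₗ[ℂ] H) : Set H) = {x | P x = x} := by
        ext x
        constructor
        · rintro ⟨z, rfl⟩
          exact hP2 z
        · intro hx
          exact ⟨x, hx⟩
      rw [hset]
      exact isClosed_eq P.continuous continuous_id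
    · intro x hx y hy
      obtain ⟨z, rfl⟩ := hy
      show ⟪x, P z⟫_ℂ = 0
      rw [← ContinuousLinearMap.adjoint_inner_left, hPadj]
      have : P x = 0 := hx
      rw [this, inner_zero_left]
    · constructor
      · rw [Submodule.disjoint_def]
        intro x hx hx'
        obtain ⟨z, rfl⟩ := hx'
        have : P (P z) = 0 := hx
        rw [hP2] at this
        exact this
      · rw [codisjoint_iff, eq_top_iff]
        intro x _
        rw [Submodule.mem_sup]
        refine ⟨x - P x, ?_, P x, ⟨x, rfl⟩, by abel⟩
        simp only [LinearMap.mem_ker, map_sub, ContinuousLinearMap.coe_coe]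
        rw [show P (P x) = P x from hP2 x]
        simp
    · intro x hx
      have hPx : P x = 0 := hx
      have : T (P x) = T x := by
        simp only [hP, ContinuousLinearMap.comp_apply]
        exact h1' x
      rw [hPx, map_zero] at this
      exact this.symm
    · intro x _
      refine ⟨T x, ?_⟩
      simp only [hP, ContinuousLinearMap.comp_apply]
      exact h1' x
    · intro x hx
      obtain ⟨z, rfl⟩ := hx
      show T (T (P z)) = P z
      simp only [hP, ContinuousLinearMap.comp_apply]
      rw [h1' (T z)]
  · rintro ⟨H₁, H₂, _, _, horth, hcompl, hzero, hinv, hsq⟩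
    have hdecomp : ∀ x : H, ∃ a ∈ H₁, ∃ b ∈ H₂, x = a + b := by
      intro x
      have hx : x ∈ H₁ ⊔ H₂ := by rw [hcompl.sup_eq_top]; trivial
      obtain ⟨a, ha, b, hb, h⟩ := Submodule.mem_sup.mp hx
      exact ⟨a, ha, b, hb, h.symm⟩
    -- key pointwise facts
    have hTx : ∀ x : H, ∀ a ∈ H₁, ∀ b ∈ H₂, x = a + b → T x = T b := by
      intro x a ha b _ hxab
      rw [hxab, map_add, hzero a ha, zero_add]
    have hQ : ∀ x : H, ∀ a ∈ H₁, ∀ b ∈ H₂, x = a + b → T (T x) = b := by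
      intro x a ha b hb hxab
      rw [hTx x a ha b hb hxab, hsq b hb]
    -- T ∘L T ∘L T = T
    have hTTT : T ∘L T ∘L T = T := by
      ext x
      obtain ⟨a, ha, b, hb, hxab⟩ := hdecomp x
      simp only [ContinuousLinearMap.comp_apply]
      rw [hQ x a ha b hb hxab, hTx x a ha b hb hxab]
    -- self-adjointness of T ∘L T
    have hsym : ∀ x y : H, ⟪T (T x), y⟫_ℂ = ⟪x, T (T y)⟫_ℂ := by
      intro x y
      obtain ⟨a, ha, b, hb, hxab⟩ := hdecomp x
      obtain ⟨c, hc, d, hd, hycd⟩ := hdecomp y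
      rw [hQ x a ha b hb hxab, hQ y c hc d hd hycd, hxab, hycd]
      have h1 : ⟪b, c⟫_ℂ = 0 := by
        have := horth c hc b hb
        rw [← inner_conj_symm, this, map_zero]
      have h2 : ⟪a, d⟫_ℂ = 0 := horth a ha d hd
      simp [inner_add_right, inner_add_left, h1, h2]
    have hadj : ContinuousLinearMap.adjoint (T ∘L T) = T ∘L T := by
      have : IsSelfAdjoint (T ∘L T) := by
        rw [ContinuousLinearMap.isSelfAdjoint_iff_isSymmetric]
        intro x y
        simpa using hsym x y
      rw [← ContinuousLinearMap.star_eq_adjoint]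
      exact this
    exact mp_unique T Td T h1 h2 h3 h4 hTTT hTTT hadj hadj
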